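/- Let A^{•,•} be a bounded ℤ²-graded complex vector space with compatible inner product and bounded double complex structure (∂, ∂̄), and let j: C^{•,•} ↪ A^{•,•} be a finite-dimensional sub-complex. Assume: (1) dom(Δ̃^{BC}) = ker Δ̃^{BC} ⊕ im Δ̃^{BC}; (2) ∂* and ∂̄* restrict to C^{•,•} and coincide there with the adjoints of ∂|_C and ∂̄|_C with respect to the restricted inner product. Then for every (p,q) the induced map j* on Bott-Chern cohomology H^{p,q}_{BC}(C) → H^{p,q}_{BC}(A) is injective. -/

import Mathlib

/-- The Bott-Chern Laplacian
`Δ̃^{BC} = (∂∂̄)(∂∂̄)* + (∂∂̄)*(∂∂̄) + (∂̄*∂)(∂̄*∂)* + (∂̄*∂)*(∂̄*∂) + ∂̄*∂̄ + ∂*∂`. -/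
def BCLap {V : Type*} [AddCommGroup V] [Module ℂ V]
    (d1 d2 d1s d2s : V →ₗ[ℂ] V) : V →ₗ[ℂ] V :=
  (d1 ∘ₗ d2) ∘ₗ (d2s ∘ₗ d1s) + (d2s ∘ₗ d1s) ∘ₗ (d1 ∘ₗ d2)
    + (d2s ∘ₗ d1) ∘ₗ (d1s ∘ₗ d2) + (d1s ∘ₗ d2) ∘ₗ (d2s ∘ₗ d1)
    + d2s ∘ₗ d2 + d1s ∘ₗ d1

/-- Theorem thm:inj: if `Δ̃^{BC}` induces `A = ker ⊕ im`, and the adjoints `∂*`, `∂̄*` restrict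
to a finite-dimensional sub-complex `C` (hence coincide there with the adjoints of `∂|_C`,
`∂̄|_C`), then the induced map `j*: H^{p,q}_{BC}(C) → H^{p,q}_{BC}(A)` is injective. -/
theorem stmt_7 {V : Type*} [NormedAddCommGroup V] [InnerProductSpace ℂ V]
    (A C : ℤ → ℤ → Submodule ℂ V) (d1 d2 d1s d2s : V →ₗ[ℂ] V)
    (hA1 : ∀ p q : ℤ, ∀ x ∈ A p q, d1 x ∈ A (p + 1) q)
    (hA2 : ∀ p q : ℤ, ∀ x ∈ A p q, d2 x ∈ A p (q + 1))
    (hd1d1 : d1 ∘ₗ d1 = 0) (hd2d2 : d2 ∘ₗ d2 = 0)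
    (hanti : d1 ∘ₗ d2 + d2 ∘ₗ d1 = 0)
    (hbounded : ∃ N : ℤ, ∀ p q : ℤ, (N < |p| ∨ N < |q|) → A p q = ⊥)
    (horth : ∀ p q p' q' : ℤ, (p, q) ≠ (p', q') →
      ∀ x ∈ A p q, ∀ y ∈ A p' q', (inner ℂ x y : ℂ) = 0)
    (hadj1 : ∀ x y : V, (inner ℂ (d1 x) y : ℂ) = inner ℂ x (d1s y))
    (hadj2 : ∀ x y : V, (inner ℂ (d2 x) y : ℂ) = inner ℂ x (d2s y))
    -- `C` is a finite-dimensional sub-complex of `A`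
    (hCA : ∀ p q : ℤ, C p q ≤ A p q)
    (hC1 : ∀ p q : ℤ, ∀ x ∈ C p q, d1 x ∈ C (p + 1) q)
    (hC2 : ∀ p q : ℤ, ∀ x ∈ C p q, d2 x ∈ C p (q + 1))
    (hfin : ∀ p q : ℤ, FiniteDimensional ℂ (C p q))
    -- (1) `dom Δ̃^{BC} = ker Δ̃^{BC} ⊕ im Δ̃^{BC}`
    (hdec : IsCompl (LinearMap.ker (BCLap d1 d2 d1s d2s))
      (LinearMap.range (BCLap d1 d2 d1s d2s)))
    -- (2) the adjoints `∂*` and `∂̄*` restrict to `C`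
    (hC1s : ∀ p q : ℤ, ∀ x ∈ C p q, d1s x ∈ C (p - 1) q)
    (hC2s : ∀ p q : ℤ, ∀ x ∈ C p q, d2s x ∈ C p (q - 1)) :
    -- conclusion: `H^{p,q}_{BC}(C) → H^{p,q}_{BC}(A)` is injective
    ∀ p q : ℤ, ∀ x ∈ C p q, d1 x = 0 → d2 x = 0 →
      (∃ y ∈ A (p - 1) (q - 1), x = d1 (d2 y)) →
      ∃ y' ∈ C (p - 1) (q - 1), x = d1 (d2 y') := by
  rintro p q x hx - - ⟨y, -, hxy⟩
  haveI := hfin (p - 1) (q - 1)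
  haveI := hfin p q
  -- membership facts
  have hL : ∀ z : C (p - 1) (q - 1), d1 (d2 (z : V)) ∈ C p q := by
    intro z
    have h2 := hC2 _ _ _ z.2
    have h1 := hC1 _ _ _ h2
    simpa using h1
  -- the map L : C(p-1,q-1) → C(p,q), z ↦ d1 (d2 z)
  let L : (C (p - 1) (q - 1)) →ₗ[ℂ] (C p q) :=
    ((d1 ∘ₗ d2).domRestrict (C (p - 1) (q - 1))).codRestrict (C p q) hL
  have hmem : (⟨x, hx⟩ : C p q) ∈ (LinearMap.range L)ᗮᗮ := by
    rw [Submodule.mem_orthogonal]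
    intro w hw
    -- s := d2s (d1s w) lies in C (p-1) (q-1)
    have hs1 := hC1s _ _ _ w.2
    have hs2 := hC2s _ _ _ hs1
    set s : V := d2s (d1s (w : V)) with hs_def
    -- pairing identity
    have key : ∀ v : V, (inner ℂ (d1 (d2 v)) (w : V) : ℂ) = inner ℂ v s := by
      intro v
      rw [hadj1, hadj2]
    -- w is orthogonal to every L z, so s = 0
    have hzero : s = 0 := by
      have h0 : (inner ℂ (L ⟨s, hs2⟩) w : ℂ) = 0 :=
        hw _ (LinearMap.mem_range.2 ⟨⟨s, hs2⟩, rfl⟩)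
      have h1 : (inner ℂ (d1 (d2 s)) (w : V) : ℂ) = 0 := h0
      rw [key] at h1
      exact inner_self_eq_zero.mp h1
    -- now ⟪w, x⟫ = conj ⟪x, w⟫ = conj ⟪y, s⟫ = 0
    have hxw : (inner ℂ x (w : V) : ℂ) = 0 := by
      rw [hxy, key, hzero, inner_zero_right]
    have : (inner ℂ (w : V) x : ℂ) = 0 := by
      rw [← inner_conj_symm, hxw, map_zero]
    exact this
  rw [Submodule.orthogonal_orthogonal] at hmem
  obtain ⟨z, hz⟩ := hmem
  refine ⟨z, z.2, ?_⟩
  have := congrArg Subtype.val hz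
  exact this.symm
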